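/- Let C be a linear code of length n over F_q and R̄ a set of coordinates such that the punctured code C[R̄] has minimum distance ≥ t+1. Then the shortened dual code C⊥[[R̄]] = {w_{R̄} : w ∈ C⊥, supp(w) ⊆ R̄} has dimension ≥ t, and consequently #R̄ ≥ d_t(C⊥). -/
import Mathlib


/-- Hamming weight of a vector. -/
def wt {F : Type*} [Field F] {n : ℕ} [DecidableEq F] (x : Fin n → F) : ℕ :=
  (Finset.univ.filter fun i => x i ≠ 0).card

/-- Minimum weight (= minimum distance, for linear codes) of a set of vectors. -/
noncomputable def minWt {F : Type*} [Field F] {n : ℕ} [DecidableEq F] (S : Set (Fin n → F)) : ℕ :=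
  sInf { w | ∃ x ∈ S, x ≠ 0 ∧ wt x = w }

/-- Dual code of a linear code. -/
def dualCode {F : Type*} [Field F] {n : ℕ} (C : Submodule F (Fin n → F)) :
    Submodule F (Fin n → F) where
  carrier := { w | ∀ x ∈ C, ∑ i, x i * w i = 0 }
  add_mem' := by
    intro a b ha hb x hx
    have h1 := ha x hx
    have h2 := hb x hx
    simp only [Set.mem_setOf_eq] at *
    simp [Pi.add_apply, mul_add, Finset.sum_add_distrib, h1, h2]
  zero_mem' := by intro x hx; simp
  smul_mem' := by
    intro c w hw x hx
    have h := hw x hx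
    simp only [Set.mem_setOf_eq] at *
    have : ∑ i, x i * (c • w) i = c * ∑ i, x i * w i := by
      rw [Finset.mul_sum]
      exact Finset.sum_congr rfl (by intro i _; simp [smul_eq_mul]; ring)
    rw [this, h, mul_zero]

/-- Minimum distance of the punctured code `C[R]`
(the minimum weight of a nonzero projection onto the coordinates in `R`). -/
noncomputable def punctMinDist {F : Type*} [Field F] {n : ℕ} [DecidableEq F]
    (C : Submodule F (Fin n → F)) (R : Finset (Fin n)) : ℕ :=
  sInf { w | ∃ x ∈ C, (∃ i ∈ R, x i ≠ 0) ∧ (R.filter fun i => x i ≠ 0).card = w }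

/-- `t`-th generalized Hamming weight of a linear code `D`. -/
noncomputable def ghw {F : Type*} [Field F] {n : ℕ} (t : ℕ) (D : Submodule F (Fin n → F)) : ℕ :=
  sInf { m | ∃ E : Submodule F (Fin n → F), E ≤ D ∧ Module.finrank F E = t ∧
    {i : Fin n | ∃ x ∈ E, x i ≠ 0}.ncard = m }

/-- The subspace of vectors supported in `R`. -/
def suppIn {F : Type*} [Field F] {n : ℕ} (R : Finset (Fin n)) : Submodule F (Fin n → F) where
  carrier := { w | ∀ j ∉ R, w j = 0 }
  add_mem' := by intro a b ha hb j hj; simp [ha j hj, hb j hj]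
  zero_mem' := by intro j hj; rfl
  smul_mem' := by intro c w hw j hj; simp [hw j hj]


section Aux
variable {F : Type*} [Field F] [DecidableEq F] {n : ℕ}

/-- truncation to coordinates in `R` -/
def truncR (R : Finset (Fin n)) : (Fin n → F) →ₗ[F] (Fin n → F) where
  toFun x := fun i => if i ∈ R then x i else 0
  map_add' x y := by funext i; by_cases h : i ∈ R <;> simp [h]
  map_smul' c x := by funext i; by_cases h : i ∈ R <;> simp [h]

/-- restriction map to a finset, as a linear map -/
def restr (S : Finset (Fin n)) : (Fin n → F) →ₗ[F] (↥S → F) where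
  toFun x := fun i => x i
  map_add' x y := rfl
  map_smul' c x := rfl

lemma finrank_suppIn (R : Finset (Fin n)) :
    Module.finrank F ↥(suppIn (F := F) R) = R.card := by
  have hbij : Function.Bijective ((restr (F := F) R).comp (suppIn (F := F) R).subtype) := by
    constructor
    · intro ⟨w, hw⟩ ⟨v, hv⟩ hwv
      ext j
      by_cases hj : j ∈ R
      · exact congrFun hwv ⟨j, hj⟩
      · simp [hw j hj, hv j hj]
    · intro f
      refine ⟨⟨fun j => if h : j ∈ R then f ⟨j, h⟩ else 0, fun j hj => dif_neg hj⟩, ?_⟩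
      funext i
      simp [restr, LinearMap.comp]
  rw [(LinearEquiv.ofBijective _ hbij).finrank_eq,
    Module.finrank_fintype_fun_eq_card, Fintype.card_coe]

end Aux

set_option maxHeartbeats 1000000 in
/-- If `d(C[R̄]) ≥ t + 1`, then the shortened dual code `C⊥[[R̄]]`
has dimension `≥ t`, and consequently `#R̄ ≥ d_t(C⊥)`. -/
theorem stmt4 {F : Type*} [Field F] [DecidableEq F] {n : ℕ}
    (C : Submodule F (Fin n → F)) (R : Finset (Fin n)) (t : ℕ)
    (h : t + 1 ≤ punctMinDist C R) :
    t ≤ Module.finrank F ↥(dualCode C ⊓ suppIn R) ∧ ghw t (dualCode C) ≤ R.card := by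
  classical
  -- basic consequences of `h`
  have key : ∀ x ∈ C, (∃ i ∈ R, x i ≠ 0) →
      t + 1 ≤ (R.filter fun i => x i ≠ 0).card := by
    intro x hx hi
    exact h.trans (Nat.sInf_le ⟨x, hx, hi, rfl⟩)
  have htR : t + 1 ≤ R.card := by
    obtain ⟨w, hw⟩ := Nat.nonempty_of_pos_sInf (lt_of_lt_of_le (Nat.succ_pos t) h)
    obtain ⟨x, hx, hi, hcard⟩ := hw
    have h1 : t + 1 ≤ w := h.trans (Nat.sInf_le ⟨x, hx, hi, hcard⟩)
    have h2 : w ≤ R.card := hcard ▸ Finset.card_filter_le _ _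
    omega
  set P : Submodule F (Fin n → F) := C.map (truncR R) with hP
  -- Singleton bound: finrank P ≤ R.card - t
  obtain ⟨T, hTR, hTcard⟩ := Finset.exists_subset_card_eq (show t ≤ R.card by omega)
  have hPrank : Module.finrank F ↥P ≤ R.card - t := by
    have hinj : Function.Injective ((restr (F := F) (R \ T)).comp P.subtype) := by
      rw [← LinearMap.ker_eq_bot, LinearMap.ker_eq_bot']
      rintro ⟨p, hp⟩ hzero
      have hz : ∀ i (hi : i ∈ R \ T), p i = 0 := fun i hi =>
        congrFun hzero (⟨i, hi⟩ : ↥(R \ T))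
      obtain ⟨x, hx, hpx⟩ := hp
      ext1
      show p = 0
      by_contra hp0
      obtain ⟨j, hj⟩ := Function.ne_iff.mp hp0
      have hjR : j ∈ R := by
        by_contra hjR
        exact hj (by rw [← hpx]; simp [truncR, hjR])
      have hxj : x j ≠ 0 := by
        have : p j = x j := by rw [← hpx]; simp [truncR, hjR]
        rwa [this] at hj
      have h1 := key x hx ⟨j, hjR, hxj⟩
      have hsub : (R.filter fun i => x i ≠ 0) ⊆ T := by
        intro i hi
        obtain ⟨hiR, hxi⟩ := Finset.mem_filter.mp hi
        by_contra hiT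
        have : p i = x i := by rw [← hpx]; simp [truncR, hiR]
        exact hxi (this ▸ hz i (Finset.mem_sdiff.mpr ⟨hiR, hiT⟩))
      have h2 := Finset.card_le_card hsub
      omega
    have := LinearMap.finrank_le_finrank_of_injective hinj
    rwa [Module.finrank_fintype_fun_eq_card, Fintype.card_coe,
      Finset.card_sdiff_of_subset hTR, hTcard] at this
  -- the pairing map
  set Ψ : ↥(suppIn (F := F) R) →ₗ[F] Module.Dual F ↥P :=
    { toFun := fun w =>
        { toFun := fun p => ∑ i, (p : Fin n → F) i * (w : Fin n → F) i
          map_add' := by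
            intro a b
            simp [add_mul, Finset.sum_add_distrib]
          map_smul' := by
            intro c a
            simp [Finset.mul_sum, mul_assoc] }
      map_add' := by
        intro a b
        ext p
        simp [mul_add, Finset.sum_add_distrib]
      map_smul' := by
        intro c a
        ext p
        simp [Finset.mul_sum]
        ring_nf
        exact Finset.sum_congr rfl fun i _ => by ring } with hΨ
  -- the kernel of Ψ is the shortened dual code
  have hker : (LinearMap.ker Ψ).map (suppIn (F := F) R).subtype
      = dualCode C ⊓ suppIn R := by
    ext w
    simp only [Submodule.mem_map, LinearMap.mem_ker, Submodule.mem_inf]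
    constructor
    · rintro ⟨⟨w, hw⟩, hker, rfl⟩
      refine ⟨?_, hw⟩
      intro x hx
      have hp : (truncR (F := F) R) x ∈ P := Submodule.mem_map_of_mem hx
      have := DFunLike.congr_fun hker (⟨_, hp⟩ : ↥P)
      simp only [hΨ, LinearMap.coe_mk, AddHom.coe_mk, LinearMap.zero_apply] at this ⊢
      rw [← this]
      refine Finset.sum_congr rfl fun i _ => ?_
      by_cases hi : i ∈ R
      · simp [truncR, hi]
      · simp [truncR, hi, hw i hi]
    · rintro ⟨hdual, hw⟩
      refine ⟨⟨w, hw⟩, ?_, rfl⟩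
      ext ⟨p, hp⟩
      obtain ⟨x, hx, rfl⟩ := hp
      have := hdual x hx
      simp only [hΨ, LinearMap.coe_mk, AddHom.coe_mk, LinearMap.zero_apply]
      rw [← this]
      refine Finset.sum_congr rfl fun i _ => ?_
      by_cases hi : i ∈ R
      · simp [truncR, hi]
      · simp [truncR, hi, hw i hi]
  -- rank-nullity gives the dimension bound
  have hrn := LinearMap.finrank_range_add_finrank_ker Ψ
  have hrange : Module.finrank F ↥(LinearMap.range Ψ) ≤ R.card - t := by
    refine le_trans (Submodule.finrank_le _) ?_
    rw [Subspace.dual_finrank_eq]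
    exact hPrank
  have hDrank : t ≤ Module.finrank F ↥(dualCode C ⊓ suppIn R) := by
    rw [← hker, Submodule.finrank_map_subtype_eq]
    rw [finrank_suppIn] at hrn
    omega
  refine ⟨hDrank, ?_⟩
  -- pick a subspace of dimension t inside the shortened dual code
  set D : Submodule F (Fin n → F) := dualCode C ⊓ suppIn R with hD
  have : FiniteDimensional F ↥D := FiniteDimensional.finiteDimensional_submodule D
  let b := Module.finBasis F ↥D
  have hle : t ≤ Module.finrank F ↥D := hDrank
  let v : Fin t → (Fin n → F) := fun i => (b (Fin.castLE hle i) : Fin n → F)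
  have hvD : ∀ i, v i ∈ D := fun i => (b (Fin.castLE hle i)).2
  have hli : LinearIndependent F v := by
    have h1 : LinearIndependent F fun i => b (Fin.castLE hle i) :=
      b.linearIndependent.comp _ (Fin.castLE_injective hle)
    exact h1.map' D.subtype (Submodule.ker_subtype D)
  set E : Submodule F (Fin n → F) := Submodule.span F (Set.range v) with hE
  have hED : E ≤ D := Submodule.span_le.mpr (Set.range_subset_iff.mpr hvD)
  have hErank : Module.finrank F ↥E = t := by
    rw [finrank_span_eq_card hli, Fintype.card_fin]
  have hsupp : {i : Fin n | ∃ x ∈ E, x i ≠ 0} ⊆ (R : Set (Fin n)) := by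
    rintro i ⟨x, hxE, hxi⟩
    by_contra hiR
    exact hxi ((hED hxE).2 i hiR)
  refine le_trans (Nat.sInf_le ⟨E, le_trans hED inf_le_left, hErank, rfl⟩) ?_
  calc {i : Fin n | ∃ x ∈ E, x i ≠ 0}.ncard
      ≤ (R : Set (Fin n)).ncard := Set.ncard_le_ncard hsupp (R : Set (Fin n)).toFinite
    _ = R.card := Set.ncard_coe_finset R
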